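/- Let G be a finite nilpotent group that is not a p-group for any prime p, and let A ≤ Aut(G). Then Δ(G,A) is connected with diameter at most 3. -/

import Mathlib

open Subgroup

/-- The A-orbit of x under a subgroup A of Aut(G). -/
def aorb {G : Type*} [Group G] (A : Subgroup (MulAut G)) (x : G) : Set G :=
  {y | ∃ a ∈ A, a x = y}

/-- The vertex set of the automorphic cyclic graph: A-orbits of nontrivial elements. -/
def DeltaVerts (G : Type*) [Group G] (A : Subgroup (MulAut G)) :=
  {S : Set G // ∃ x : G, x ≠ 1 ∧ S = aorb A x}

/-- The automorphic cyclic graph Δ(G,A). -/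
def Delta (G : Type*) [Group G] (A : Subgroup (MulAut G)) :
    SimpleGraph (DeltaVerts G A) where
  Adj S T := S ≠ T ∧ ∃ x ∈ S.1, ∃ y ∈ T.1,
    IsCyclic (Subgroup.closure {x, y} : Subgroup G)
  symm := ⟨by
    rintro S T ⟨hne, x, hx, y, hy, hc⟩
    exact ⟨hne.symm, y, hy, x, hx, by rwa [Set.pair_comm]⟩⟩
  loopless := ⟨fun S h => h.1 rfl⟩

/-- The vertex corresponding to the A-orbit of a nontrivial element x. -/
def vtx {G : Type*} [Group G] (A : Subgroup (MulAut G)) (x : G) (hx : x ≠ 1) :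
    DeltaVerts G A :=
  ⟨aorb A x, x, hx, rfl⟩

section Aux

variable {G : Type*} [Group G]

lemma aux_isCyclic_zpowers (g : G) : IsCyclic (zpowers g) := by
  refine ⟨⟨g, mem_zpowers g⟩, fun x => ?_⟩
  obtain ⟨k, hk⟩ := mem_zpowers_iff.mp x.2
  exact ⟨k, Subtype.ext (by push_cast; exact hk)⟩

lemma aux_commute_of_coprime [Finite G] [Group.IsNilpotent G]
    {s t : G} (h : Nat.Coprime (orderOf s) (orderOf t)) : Commute s t := by
  obtain ⟨e⟩ := ((isNilpotent_of_finite_tfae (G := G)).out 0 4).mp ‹Group.IsNilpotent G›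
  set fs := e.symm s with hfs
  set ft := e.symm t with hft
  have hs : e fs = s := e.apply_symm_apply s
  have ht : e ft = t := e.apply_symm_apply t
  have hos : orderOf fs = orderOf s := by
    rw [← hs]; exact (orderOf_injective e.toMonoidHom e.injective fs).symm
  have hot : orderOf ft = orderOf t := by
    rw [← ht]; exact (orderOf_injective e.toMonoidHom e.injective ft).symm
  have hcomm : Commute fs ft := by
    show fs * ft = ft * fs
    funext p
    funext P
    show fs p P * ft p P = ft p P * fs p P
    haveI : Fact (Nat.Prime (p : ℕ)) := ⟨Nat.prime_of_mem_primeFactors p.2⟩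
    have hdvd1 : orderOf (fs p P) ∣ orderOf s := by
      rw [← hos]
      exact orderOf_dvd_of_pow_eq_one (by
        have := congrFun (congrFun (pow_orderOf_eq_one fs) p) P
        simpa using this)
    have hdvd2 : orderOf (ft p P) ∣ orderOf t := by
      rw [← hot]
      exact orderOf_dvd_of_pow_eq_one (by
        have := congrFun (congrFun (pow_orderOf_eq_one ft) p) P
        simpa using this)
    obtain ⟨k1, hk1⟩ := (P.isPGroup' (fs p P))
    obtain ⟨k2, hk2⟩ := (P.isPGroup' (ft p P))
    have h1 : orderOf (fs p P) ∣ (p:ℕ) ^ k1 := orderOf_dvd_of_pow_eq_one hk1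
    have h2 : orderOf (ft p P) ∣ (p:ℕ) ^ k2 := orderOf_dvd_of_pow_eq_one hk2
    rcases eq_or_ne (orderOf (fs p P)) 1 with h1' | h1'
    · rw [orderOf_eq_one_iff.mp h1', one_mul, mul_one]
    rcases eq_or_ne (orderOf (ft p P)) 1 with h2' | h2'
    · rw [orderOf_eq_one_iff.mp h2', one_mul, mul_one]
    · exfalso
      obtain ⟨j1, hj1le, hj1⟩ := (Nat.dvd_prime_pow Fact.out).mp h1
      obtain ⟨j2, hj2le, hj2⟩ := (Nat.dvd_prime_pow Fact.out).mp h2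
      have hp1 : (p:ℕ) ∣ orderOf (fs p P) := by
        rw [hj1]; exact dvd_pow_self _ (by rintro rfl; rw [pow_zero] at hj1; exact h1' hj1)
      have hp2 : (p:ℕ) ∣ orderOf (ft p P) := by
        rw [hj2]; exact dvd_pow_self _ (by rintro rfl; rw [pow_zero] at hj2; exact h2' hj2)
      have hd : (p:ℕ) ∣ Nat.gcd (orderOf s) (orderOf t) :=
        Nat.dvd_gcd (hp1.trans hdvd1) (hp2.trans hdvd2)
      rw [h] at hd
      exact (Fact.out : Nat.Prime (p:ℕ)).one_lt.ne' (Nat.dvd_one.mp hd)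
  show s * t = t * s
  calc s * t = e fs * e ft := by rw [hs, ht]
    _ = e (fs * ft) := (map_mul e fs ft).symm
    _ = e (ft * fs) := congrArg e hcomm
    _ = e ft * e fs := map_mul e ft fs
    _ = t * s := by rw [hs, ht]

lemma aux_mem_zpowers_mul_left [Finite G] {s t : G}
    (hc : Commute s t) (h : Nat.Coprime (orderOf s) (orderOf t)) : s ∈ zpowers (s * t) := by
  have h1 : (s * t) ^ orderOf t = s ^ orderOf t := by
    rw [hc.mul_pow, pow_orderOf_eq_one, mul_one]
  have h2 : orderOf (s ^ orderOf t) = orderOf s := Nat.Coprime.orderOf_pow h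
  have hle : zpowers (s ^ orderOf t) ≤ zpowers s := by
    rw [zpowers_le]; exact ⟨(orderOf t : ℤ), by simp [zpow_natCast]⟩
  have heq : zpowers (s ^ orderOf t) = zpowers s := by
    apply Subgroup.eq_of_le_of_card_ge hle
    rw [Nat.card_zpowers, Nat.card_zpowers, h2]
  have hmem : s ∈ zpowers (s ^ orderOf t) := heq ▸ mem_zpowers s
  have hle2 : zpowers (s ^ orderOf t) ≤ zpowers (s * t) := by
    rw [zpowers_le, ← h1]
    exact ⟨(orderOf t : ℤ), by simp [zpow_natCast]⟩
  exact hle2 hmem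

lemma aux_isCyclic_closure_pair [Finite G] {s t : G}
    (hc : Commute s t) (h : Nat.Coprime (orderOf s) (orderOf t)) :
    IsCyclic (closure ({s, t} : Set G)) := by
  have hs : s ∈ zpowers (s * t) := aux_mem_zpowers_mul_left hc h
  have ht : t ∈ zpowers (s * t) := by
    have := aux_mem_zpowers_mul_left hc.symm (Nat.Coprime.symm h)
    rwa [show t * s = s * t from hc.symm] at this
  have hle : closure ({s, t} : Set G) ≤ zpowers (s * t) := by
    rw [closure_le]
    rintro x (rfl | rfl) <;> assumption
  haveI := aux_isCyclic_zpowers (s * t)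
  exact Subgroup.isCyclic_of_le hle

lemma aux_mem_aorb_self (A : Subgroup (MulAut G)) (x : G) : x ∈ aorb A x :=
  ⟨1, one_mem A, rfl⟩

lemma aux_edist_le_one {A : Subgroup (MulAut G)} {x y : G} (hx : x ≠ 1) (hy : y ≠ 1)
    (h : IsCyclic (closure ({x, y} : Set G))) :
    (Delta G A).edist (vtx A x hx) (vtx A y hy) ≤ 1 := by
  by_cases he : vtx A x hx = vtx A y hy
  · rw [he, SimpleGraph.edist_self]; exact zero_le_one
  · exact le_of_eq (SimpleGraph.edist_eq_one_iff_adj.mpr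
      ⟨he, x, aux_mem_aorb_self A x, y, aux_mem_aorb_self A y, h⟩)

end Aux

theorem stmt6 {G : Type*} [Group G] [Finite G] (A : Subgroup (MulAut G))
    [Group.IsNilpotent G]
    (h : ∃ p q : ℕ, p.Prime ∧ q.Prime ∧ p ≠ q ∧ p ∣ Nat.card G ∧ q ∣ Nat.card G) :
    (Delta G A).Connected ∧ ∀ u v : DeltaVerts G A, (Delta G A).dist u v ≤ 3 := by
  obtain ⟨p, q, hp, hq, hpq, hpd, hqd⟩ := h
  haveI : Fact p.Prime := ⟨hp⟩
  haveI : Fact q.Prime := ⟨hq⟩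
  -- the hub: any vertex is within edist 1 of a vertex of any prescribed prime order
  have hub : ∀ (x : G) (hx : x ≠ 1) (r : ℕ), Nat.Prime r → r ∣ Nat.card G →
      ∃ (z : G) (hz : z ≠ 1), orderOf z = r ∧
        (Delta G A).edist (vtx A x hx) (vtx A z hz) ≤ 1 := by
    intro x hx r hr hrd
    haveI : Fact r.Prime := ⟨hr⟩
    by_cases hdvd : r ∣ orderOf x
    · obtain ⟨z0, hz0⟩ := exists_prime_orderOf_dvd_card' (G := zpowers x) r
        (by rw [Nat.card_zpowers]; exact hdvd)
      have hoz : orderOf (z0 : G) = r := by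
        rw [orderOf_coe]; exact hz0
      have hz1 : (z0 : G) ≠ 1 := by
        intro hone
        rw [hone, orderOf_one] at hoz
        exact hr.one_lt.ne hoz
      refine ⟨(z0 : G), hz1, hoz, ?_⟩
      apply aux_edist_le_one
      have hle : closure ({x, (z0 : G)} : Set G) ≤ zpowers x := by
        rw [closure_le]
        rintro w (rfl | rfl)
        · exact mem_zpowers _
        · exact z0.2
      haveI := aux_isCyclic_zpowers x
      exact Subgroup.isCyclic_of_le hle
    · obtain ⟨z, hz⟩ := exists_prime_orderOf_dvd_card' r hrd
      have hz1 : z ≠ 1 := by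
        intro hone
        rw [hone, orderOf_one] at hz
        exact hr.one_lt.ne hz
      refine ⟨z, hz1, hz, ?_⟩
      have hco : Nat.Coprime (orderOf x) (orderOf z) := by
        rw [hz]
        exact (hr.coprime_iff_not_dvd.mpr hdvd).symm
      exact aux_edist_le_one hx hz1 (aux_isCyclic_closure_pair (aux_commute_of_coprime hco) hco)
  -- main estimate
  have key : ∀ u v : DeltaVerts G A,
      (Delta G A).Reachable u v ∧ (Delta G A).edist u v ≤ 3 := by
    intro u v
    obtain ⟨x, hx, hux⟩ := u.2
    obtain ⟨y, hy, hvy⟩ := v.2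
    have hu : u = vtx A x hx := Subtype.ext hux
    have hv : v = vtx A y hy := Subtype.ext hvy
    subst hu; subst hv
    obtain ⟨zp, hzp1, hzpo, hzpe⟩ := hub x hx p hp hpd
    obtain ⟨zq, hzq1, hzqo, hzqe⟩ := hub y hy q hq hqd
    have hco : Nat.Coprime (orderOf zp) (orderOf zq) := by
      rw [hzpo, hzqo]
      exact (Nat.coprime_primes hp hq).mpr hpq
    have hmid : (Delta G A).edist (vtx A zp hzp1) (vtx A zq hzq1) ≤ 1 :=
      aux_edist_le_one hzp1 hzq1 (aux_isCyclic_closure_pair (aux_commute_of_coprime hco) hco)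
    have h3 : (Delta G A).edist (vtx A x hx) (vtx A y hy) ≤ 3 := by
      calc (Delta G A).edist (vtx A x hx) (vtx A y hy)
          ≤ (Delta G A).edist (vtx A x hx) (vtx A zp hzp1) +
            (Delta G A).edist (vtx A zp hzp1) (vtx A y hy) := SimpleGraph.edist_triangle
        _ ≤ (Delta G A).edist (vtx A x hx) (vtx A zp hzp1) +
            ((Delta G A).edist (vtx A zp hzp1) (vtx A zq hzq1) +
             (Delta G A).edist (vtx A zq hzq1) (vtx A y hy)) := by
              gcongr
              exact SimpleGraph.edist_triangle
        _ ≤ 1 + (1 + 1) := by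
              gcongr
              rw [SimpleGraph.edist_comm]
              exact hzqe
        _ = 3 := by norm_num
    refine ⟨?_, h3⟩
    apply SimpleGraph.reachable_of_edist_ne_top
    intro htop
    rw [htop] at h3
    exact (by simp : ¬ (⊤ : ℕ∞) ≤ 3) h3
  obtain ⟨a, ha⟩ := exists_prime_orderOf_dvd_card' p hpd
  have ha1 : a ≠ 1 := by
    intro hone
    rw [hone, orderOf_one] at ha
    exact hp.one_lt.ne ha
  haveI : Nonempty (DeltaVerts G A) := ⟨vtx A a ha1⟩
  refine ⟨⟨fun u v => (key u v).1⟩, fun u v => ?_⟩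
  obtain ⟨w, hw⟩ := ((key u v).1).exists_walk_length_eq_edist
  have hwl : (w.length : ℕ∞) ≤ 3 := hw ▸ (key u v).2
  have hwl' : w.length ≤ 3 := by exact_mod_cast hwl
  exact le_trans (SimpleGraph.dist_le w) hwl'
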